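/- With the setup of the candidate sets: for any indices i, j, k₁, k₂ such that the block representatives k₁', k₂' both lie in K(i',j'), we have |(A_{i,k₁} + B_{k₁,j}) - (A_{i,k₂} + B_{k₂,j})| ≤ 16δm. -/
import Mathlib


/-- A matrix (as a function on `Fin n`) is `δ`-bounded-difference if entries at
adjacent positions (differing by 1 in one coordinate) differ by at most `δ`. -/
def BDiff {n : ℕ} (δ : ℤ) (A : Fin n → Fin n → ℤ) : Prop :=
  ∀ i j i' j' : Fin n,
    ((i'.val = i.val + 1 ∧ j' = j) ∨ (i' = i ∧ j'.val = j.val + 1)) →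
    |A i' j' - A i j| ≤ δ

/-- Representative (first element) of the length-`m` block containing `i`. -/
def rep {n : ℕ} (m : ℕ) (i : Fin n) : Fin n :=
  ⟨m * (i.val / m),
    lt_of_le_of_lt (by rw [Nat.mul_comm]; exact Nat.div_mul_le_self _ _) i.isLt⟩

/-- Min-plus product `C = A ⋆ B`. -/
def minplus {n : ℕ} (A B : Fin n → Fin n → ℤ) (i j : Fin n) : ℤ :=
  Finset.inf' Finset.univ ⟨i, Finset.mem_univ i⟩ (fun k => A i k + B k j)

/-- Block-approximate min-plus product: minimum over representative indices. -/
def Ctil {n : ℕ} (m : ℕ) (A B : Fin n → Fin n → ℤ) (i j : Fin n) : ℤ :=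
  Finset.inf' ((Finset.univ : Finset (Fin n)).filter fun k => m ∣ k.val)
    ⟨⟨0, i.pos⟩, by simp⟩ (fun k => A (rep m i) k + B k (rep m j))

/-- Candidate set `K(i',j')`. -/
def Kset {n : ℕ} (m : ℕ) (δ : ℤ) (A B : Fin n → Fin n → ℤ) (i j : Fin n) :
    Finset (Fin n) :=
  Finset.univ.filter
    (fun k => m ∣ k.val ∧
      A (rep m i) k + B k (rep m j) ≤ Ctil m A B i j + 8 * δ * m)

lemma bdiff_row {n : ℕ} {δ : ℤ} {A : Fin n → Fin n → ℤ} (hA : BDiff δ A) (hδ : 0 ≤ δ) :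
    ∀ d : ℕ, ∀ i i' k : Fin n, i'.val = i.val + d → |A i' k - A i k| ≤ δ * d := by
  intro d
  induction d with
  | zero =>
    intro i i' k h
    have : i' = i := Fin.ext (by simpa using h)
    simp [this]
  | succ d ih =>
    intro i i' k h
    have hmid : i.val + d < n := by have := i'.isLt; omega
    set mid : Fin n := ⟨i.val + d, hmid⟩ with hmiddef
    have h1 := ih i mid k rfl
    have h2 := hA mid k i' k (Or.inl ⟨by simp [hmiddef]; omega, rfl⟩)
    have h3 : |A i' k - A i k| ≤ |A i' k - A mid k| + |A mid k - A i k| := abs_sub_le _ _ _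
    push_cast
    linarith

lemma bdiff_col {n : ℕ} {δ : ℤ} {A : Fin n → Fin n → ℤ} (hA : BDiff δ A) (hδ : 0 ≤ δ) :
    ∀ d : ℕ, ∀ i j j' : Fin n, j'.val = j.val + d → |A i j' - A i j| ≤ δ * d := by
  intro d
  induction d with
  | zero =>
    intro i j j' h
    have : j' = j := Fin.ext (by simpa using h)
    simp [this]
  | succ d ih =>
    intro i j j' h
    have hmid : j.val + d < n := by have := j'.isLt; omega
    set mid : Fin n := ⟨j.val + d, hmid⟩ with hmiddef
    have h1 := ih i j mid rfl
    have h2 := hA i mid i j' (Or.inr ⟨rfl, by simp [hmiddef]; omega⟩)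
    have h3 : |A i j' - A i j| ≤ |A i j' - A i mid| + |A i mid - A i j| := abs_sub_le _ _ _
    push_cast
    linarith

/-- if the block representatives of `k₁, k₂` both lie in the
candidate set `K(i',j')`, then
`|(A_{i,k₁} + B_{k₁,j}) - (A_{i,k₂} + B_{k₂,j})| ≤ 16δm`. -/
theorem stmt5 {n : ℕ} (δ : ℤ) (hδ : 0 < δ) (A B : Fin n → Fin n → ℤ)
    (hA : BDiff δ A) (hB : BDiff δ B) (m : ℕ) (hm : m ∣ n) (i j k₁ k₂ : Fin n)
    (h₁ : rep m k₁ ∈ Kset m δ A B i j) (h₂ : rep m k₂ ∈ Kset m δ A B i j) :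
    |(A i k₁ + B k₁ j) - (A i k₂ + B k₂ j)| ≤ 16 * δ * m := by
  have hδ' : (0:ℤ) ≤ δ := hδ.le
  have hmpos : 0 < m := Nat.pos_of_dvd_of_pos hm i.pos
  -- rep decomposition
  have hrep : ∀ x : Fin n, x.val = (rep m x).val + x.val % m := fun x => (Nat.div_add_mod x.val m).symm
  have hmodlt : ∀ x : Fin n, ((x.val % m : ℕ) : ℤ) ≤ (m : ℤ) := fun x => by
    exact_mod_cast (Nat.mod_lt x.val hmpos).le
  -- distance bounds
  have bndA : ∀ (x y : Fin n), |A x y - A (rep m x) (rep m y)| ≤ 2 * δ * m := by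
    intro x y
    have h1 := bdiff_row hA hδ' (x.val % m) (rep m x) x y (hrep x)
    have h2 := bdiff_col hA hδ' (y.val % m) (rep m x) (rep m y) y (hrep y)
    have h3 : |A x y - A (rep m x) (rep m y)| ≤
        |A x y - A (rep m x) y| + |A (rep m x) y - A (rep m x) (rep m y)| := abs_sub_le _ _ _
    have h4 : δ * ((x.val % m : ℕ) : ℤ) ≤ δ * (m:ℤ) := mul_le_mul_of_nonneg_left (hmodlt x) hδ'
    have h5 : δ * ((y.val % m : ℕ) : ℤ) ≤ δ * (m:ℤ) := mul_le_mul_of_nonneg_left (hmodlt y) hδ'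
    linarith
  have bndB : ∀ (x y : Fin n), |B x y - B (rep m x) (rep m y)| ≤ 2 * δ * m := by
    intro x y
    have h1 := bdiff_row hB hδ' (x.val % m) (rep m x) x y (hrep x)
    have h2 := bdiff_col hB hδ' (y.val % m) (rep m x) (rep m y) y (hrep y)
    have h3 : |B x y - B (rep m x) (rep m y)| ≤
        |B x y - B (rep m x) y| + |B (rep m x) y - B (rep m x) (rep m y)| := abs_sub_le _ _ _
    have h4 : δ * ((x.val % m : ℕ) : ℤ) ≤ δ * (m:ℤ) := mul_le_mul_of_nonneg_left (hmodlt x) hδ'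
    have h5 : δ * ((y.val % m : ℕ) : ℤ) ≤ δ * (m:ℤ) := mul_le_mul_of_nonneg_left (hmodlt y) hδ'
    linarith
  -- Kset facts
  simp only [Kset, Finset.mem_filter, Finset.mem_univ, true_and] at h₁ h₂
  set a₁ := A (rep m i) (rep m k₁) + B (rep m k₁) (rep m j) with ha₁
  set a₂ := A (rep m i) (rep m k₂) + B (rep m k₂) (rep m j) with ha₂
  have hc₁ : Ctil m A B i j ≤ a₁ := by
    apply Finset.inf'_le
    simp [h₁.1]
  have hc₂ : Ctil m A B i j ≤ a₂ := by
    apply Finset.inf'_le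
    simp [h₂.1]
  have hrepdiff : |a₁ - a₂| ≤ 8 * δ * m := by
    rw [abs_le]
    constructor <;> linarith [h₁.2, h₂.2]
  -- relate exact sums to rep sums
  have hd₁ : |(A i k₁ + B k₁ j) - a₁| ≤ 4 * δ * m := by
    have := bndA i k₁
    have := bndB k₁ j
    have h3 : |(A i k₁ + B k₁ j) - a₁| ≤
        |A i k₁ - A (rep m i) (rep m k₁)| + |B k₁ j - B (rep m k₁) (rep m j)| := by
      rw [ha₁]
      calc |(A i k₁ + B k₁ j) - (A (rep m i) (rep m k₁) + B (rep m k₁) (rep m j))|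
          = |(A i k₁ - A (rep m i) (rep m k₁)) + (B k₁ j - B (rep m k₁) (rep m j))| := by ring_nf
        _ ≤ _ := abs_add_le _ _
    linarith
  have hd₂ : |(A i k₂ + B k₂ j) - a₂| ≤ 4 * δ * m := by
    have := bndA i k₂
    have := bndB k₂ j
    have h3 : |(A i k₂ + B k₂ j) - a₂| ≤
        |A i k₂ - A (rep m i) (rep m k₂)| + |B k₂ j - B (rep m k₂) (rep m j)| := by
      rw [ha₂]
      calc |(A i k₂ + B k₂ j) - (A (rep m i) (rep m k₂) + B (rep m k₂) (rep m j))|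
          = |(A i k₂ - A (rep m i) (rep m k₂)) + (B k₂ j - B (rep m k₂) (rep m j))| := by ring_nf
        _ ≤ _ := abs_add_le _ _
    linarith
  have final : |(A i k₁ + B k₁ j) - (A i k₂ + B k₂ j)| ≤
      |(A i k₁ + B k₁ j) - a₁| + |a₁ - a₂| + |a₂ - (A i k₂ + B k₂ j)| := by
    calc |(A i k₁ + B k₁ j) - (A i k₂ + B k₂ j)|
        ≤ |(A i k₁ + B k₁ j) - a₂| + |a₂ - (A i k₂ + B k₂ j)| := abs_sub_le _ _ _
      _ ≤ (|(A i k₁ + B k₁ j) - a₁| + |a₁ - a₂|) + |a₂ - (A i k₂ + B k₂ j)| := by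
          linarith [abs_sub_le (A i k₁ + B k₁ j) a₁ a₂]
  have : |a₂ - (A i k₂ + B k₂ j)| = |(A i k₂ + B k₂ j) - a₂| := abs_sub_comm _ _
  linarith
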